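/- Let (𝔦_t)_{t∈I} be a smooth deformation of an ideal 𝔦 inside a Lie algebra 𝔤, presented by a smooth curve α: I → GL(𝔤) with α(0) = id and α(t)(𝔦) = 𝔦_t, and suppose the graph presentation 𝔦_t = graph(φ_t) with φ_t = tη + t²ω + O(t³) for linear maps η, ω: 𝔦 → 𝔦^c. Then the ideal condition [𝔤, graph(φ_t)] ⊆ graph(φ_t) for all t implies: (1) pr_{𝔦^c}[x, η(u)] = η([x,u]) for all x ∈ 𝔤, u ∈ 𝔦 (δ^Hom η = 0), and (2) pr_{𝔦^c}[x, ω(u)] − η(pr_𝔦[x, η(u)]) − ω([x,u]) = 0 for all x, u, i.e. m₂(η,η) = −2δ^Hom(ω), so the Kuranishi class of η vanishes. -/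

import Mathlib

open Asymptotics Filter

lemma aux_abs_le_one : ∀ᶠ t : ℝ in nhds 0, ‖t‖ ≤ 1 := by
  have h : Metric.closedBall (0:ℝ) 1 ∈ nhds (0:ℝ) := Metric.closedBall_mem_nhds 0 one_pos
  filter_upwards [h] with t ht
  simpa [Real.dist_eq] using ht

lemma aux_sq_bigO_id : (fun t : ℝ => t ^ 2) =O[nhds 0] fun t => t := by
  apply IsBigO.of_bound 1
  filter_upwards [aux_abs_le_one] with t ht
  have : ‖t ^ 2‖ = ‖t‖ * ‖t‖ := by
    rw [sq]; exact norm_mul t t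
  rw [this]; nlinarith [norm_nonneg t]

lemma aux_cube_littleo_sq : (fun t : ℝ => t ^ 3) =o[nhds 0] fun t => t ^ 2 :=
  Asymptotics.isLittleO_pow_pow (by norm_num)

lemma aux_const_smul {E : Type*} [NormedAddCommGroup E] [NormedSpace ℝ E]
    (w : E) (k : ℕ) : (fun t : ℝ => t ^ k • w) =O[nhds 0] fun t => t ^ k := by
  apply IsBigO.of_bound ‖w‖
  filter_upwards with t
  rw [norm_smul, mul_comm]

lemma aux_const_smul1 {E : Type*} [NormedAddCommGroup E] [NormedSpace ℝ E]
    (w : E) : (fun t : ℝ => t • w) =O[nhds 0] fun t => t := by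
  have := aux_const_smul w 1
  simpa using this

lemma aux_smul_littleo {E : Type*} [NormedAddCommGroup E] [NormedSpace ℝ E]
    {f : ℝ → E} (h : f =o[nhds 0] fun t => t ^ 2) :
    (fun t => t • f t) =o[nhds 0] fun t => t ^ 2 := by
  have h1 : (fun t : ℝ => t • f t) =O[nhds 0] f := by
    apply IsBigO.of_bound 1
    filter_upwards [aux_abs_le_one] with t ht
    rw [norm_smul]
    nlinarith [norm_nonneg (f t)]
  exact h1.trans_isLittleO h

lemma aux_coeff {E : Type*} [NormedAddCommGroup E] [NormedSpace ℝ E] {w₁ w₂ : E}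
    (h : (fun t : ℝ => t • w₁ + t ^ 2 • w₂) =o[nhds (0:ℝ)] fun t => t ^ 2) :
    w₁ = 0 ∧ w₂ = 0 := by
  have hw1 : w₁ = 0 := by
    have h2 : (fun t : ℝ => t • w₁) =O[nhds 0] fun t => t ^ 2 := by
      have := h.isBigO.sub (aux_const_smul w₂ 2)
      exact this.congr_left fun t => by abel
    obtain ⟨C, hC⟩ := h2.bound
    have hle : ‖w₁‖ ≤ 0 := by
      have htend : Tendsto (fun t : ℝ => C * ‖t‖) (nhdsWithin 0 {(0:ℝ)}ᶜ) (nhds 0) := by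
        have : Tendsto (fun t : ℝ => C * ‖t‖) (nhds 0) (nhds (C * ‖(0:ℝ)‖)) := by
          exact (tendsto_norm.comp tendsto_id).const_mul C |>.comp tendsto_id
        simpa using this.mono_left nhdsWithin_le_nhds
      apply ge_of_tendsto htend
      filter_upwards [hC.filter_mono nhdsWithin_le_nhds, self_mem_nhdsWithin] with t ht ht0
      have ht0' : (0:ℝ) < ‖t‖ := by simpa using norm_pos_iff.mpr ht0
      rw [norm_smul] at ht
      have hsq : ‖t ^ 2‖ = ‖t‖ * ‖t‖ := by rw [sq]; exact norm_mul t t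
      rw [hsq] at ht
      have : ‖t‖ * ‖w₁‖ ≤ ‖t‖ * (C * ‖t‖) := by nlinarith
      exact le_of_mul_le_mul_left this ht0'
    simpa using norm_le_zero_iff.mp hle
  refine ⟨hw1, ?_⟩
  have h' : (fun t : ℝ => t ^ 2 • w₂) =o[nhds (0:ℝ)] fun t => t ^ 2 := by
    refine h.congr_left fun t => ?_
    rw [hw1]; simp
  have hle : ∀ ε > (0:ℝ), ‖w₂‖ ≤ ε := by
    intro ε hε
    have hev := (h'.def hε).filter_mono (nhdsWithin_le_nhds (s := {(0:ℝ)}ᶜ))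
    obtain ⟨t, ht, ht0⟩ := (hev.and self_mem_nhdsWithin).exists
    have ht0' : (0:ℝ) < ‖t‖ := by simpa using norm_pos_iff.mpr ht0
    rw [norm_smul] at ht
    have hsq : ‖t ^ 2‖ = ‖t‖ * ‖t‖ := by rw [sq]; exact norm_mul t t
    rw [hsq] at ht
    nlinarith [mul_pos ht0' ht0']
  have : ‖w₂‖ ≤ 0 := by
    by_contra hc
    push_neg at hc
    have := hle (‖w₂‖ / 2) (by linarith)
    linarith
  simpa using norm_le_zero_iff.mp this

/-- Let `(𝔤, β)` be a finite-dimensional real Lie algebra (bracket `β`, skew-symmetric and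
satisfying Jacobi), `𝔦 ⊆ 𝔤` an ideal with complement `𝔦^c` (projections `pr_𝔦`,
`pr_{𝔦^c}`), and let `(graph(φ_t))_t` be a smooth deformation of `𝔦` through ideals,
with Taylor expansion `φ_t = t·η + t²·ω + o(t²)`.  Then:
(1) `pr_{𝔦^c}(β(x, η u)) = η(β(x,u))` for all `x ∈ 𝔤`, `u ∈ 𝔦` (i.e. `δ^Hom η = 0`);
(2) `pr_{𝔦^c}(β(x, ω u)) − η(pr_𝔦(β(x, η u))) − ω(β(x,u)) = 0`;
(3) equivalently `m₂(η,η) = −2·δ^Hom(ω)`, so the Kuranishi class of `η` vanishes. -/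
theorem statement15 {L : Type*} [NormedAddCommGroup L] [NormedSpace ℝ L]
    [FiniteDimensional ℝ L]
    (β : L →ₗ[ℝ] L →ₗ[ℝ] L)
    (hskew : ∀ x y : L, β x y = -β y x)
    (hjac : ∀ x y z : L, β (β x y) z + β (β y z) x + β (β z x) y = 0)
    (I Ic : Submodule ℝ L)
    (hIdeal : ∀ x z : L, z ∈ I → β x z ∈ I)
    (pI : L →ₗ[ℝ] I) (pC : L →ₗ[ℝ] Ic)
    (hsum : ∀ z : L, ((pI z : L)) + ((pC z : L)) = z)
    (hI : ∀ u : I, pI (u : L) = u)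
    (hC : ∀ v : Ic, pC (v : L) = v)
    (φ : ℝ → (I →ₗ[ℝ] Ic)) (η ω : I →ₗ[ℝ] Ic)
    -- Taylor expansion `φ_t = t η + t² ω + O(t³)`
    (hTaylor : ∀ u : I,
      (fun t : ℝ => ((φ t u : L)) - t • ((η u : L)) - t ^ 2 • ((ω u : L)))
        =o[nhds (0 : ℝ)] fun t => t ^ 2)
    -- `graph(φ_t)` is an ideal of `𝔤` for all `t`
    (hgraph : ∀ (t : ℝ) (x : L) (u : I),
      ∃ v : I, β x ((u : L) + ((φ t u : L))) = (v : L) + ((φ t v : L))) :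
    (∀ (x : L) (u : I), pC (β x ((η u : L))) = η ⟨β x (u : L), hIdeal x (u : L) u.2⟩) ∧
    (∀ (x : L) (u : I),
      pC (β x ((ω u : L))) - η (pI (β x ((η u : L)))) -
        ω ⟨β x (u : L), hIdeal x (u : L) u.2⟩ = 0) ∧
    (∀ (x : L) (u : I),
      (-2 : ℝ) • η (pI (β x ((η u : L)))) =
        (-2 : ℝ) • (pC (β x ((ω u : L))) - ω ⟨β x (u : L), hIdeal x (u : L) u.2⟩)) := by
  -- projections kill the opposite factor
  have hI0 : ∀ w : Ic, pI (w : L) = 0 := by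
    intro w
    have h1 := hsum (w : L)
    have h2 : ((pC (w : L) : L)) = (w : L) := by rw [hC w]
    have h3 : ((pI (w : L) : L)) = 0 := by
      have := h1
      rw [h2] at this
      exact add_eq_right.mp this
    exact Subtype.ext h3
  have hC0 : ∀ w : I, pC (w : L) = 0 := by
    intro w
    have h1 := hsum (w : L)
    have h2 : ((pI (w : L) : L)) = (w : L) := by rw [hI w]
    have h3 : ((pC (w : L) : L)) = 0 := by
      rw [h2] at h1
      exact add_eq_left.mp h1
    exact Subtype.ext h3
  have main : ∀ (x : L) (u : I),
      pC (β x ((η u : L))) = η ⟨β x (u : L), hIdeal x (u : L) u.2⟩ ∧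
      pC (β x ((ω u : L))) - η (pI (β x ((η u : L)))) -
        ω ⟨β x (u : L), hIdeal x (u : L) u.2⟩ = 0 := by
    intro x u
    set bu : I := ⟨β x (u : L), hIdeal x (u : L) u.2⟩ with hbu_def
    set a : I := pI (β x ((η u : L))) with ha_def
    set c : Ic := pC (β x ((η u : L))) with hc_def
    set b : I := pI (β x ((ω u : L))) with hb_def
    set d : Ic := pC (β x ((ω u : L))) with hd_def
    -- the key algebraic identity from the graph condition
    have key : ∀ t : ℝ,
        ((pC (β x ((φ t u : L))) : L)) =
          ((φ t (bu + pI (β x ((φ t u : L)))) : L)) := by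
      intro t
      obtain ⟨v, hv⟩ := hgraph t x u
      have hsplit : β x ((u : L) + ((φ t u : L))) = β x (u : L) + β x ((φ t u : L)) :=
        map_add (β x) _ _
      rw [hsplit] at hv
      have hvI : v = bu + pI (β x ((φ t u : L))) := by
        have h1 := congrArg pI hv
        rw [map_add, map_add] at h1
        have e1 : pI (β x (u : L)) = bu := hI bu
        have e2 : pI ((v : L)) = v := hI v
        have e3 : pI (((φ t v : L))) = 0 := hI0 (φ t v)
        rw [e1, e2, e3, add_zero] at h1
        exact h1.symm
      have h2 := congrArg pC hv
      rw [map_add, map_add] at h2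
      have e1 : pC (β x (u : L)) = 0 := hC0 bu
      have e2 : pC ((v : L)) = 0 := hC0 v
      have e3 : pC (((φ t v : L))) = φ t v := hC (φ t v)
      rw [e1, e2, e3, zero_add, zero_add] at h2
      rw [h2, hvI]
    -- expansions
    have E1 : (fun t : ℝ => ((pC (β x ((φ t u : L))) : L))
        - t • ((c : L)) - t ^ 2 • ((d : L))) =o[nhds 0] fun t => t ^ 2 := by
      set g : L →ₗ[ℝ] L := Ic.subtype ∘ₗ (pC ∘ₗ (β x)) with hg_def
      have h0 := (g.toContinuousLinearMap.isBigO_comp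
        (fun t : ℝ => ((φ t u : L)) - t • ((η u : L)) - t ^ 2 • ((ω u : L)))
        (nhds 0)).trans_isLittleO (hTaylor u)
      refine h0.congr_left fun t => ?_
      simp only [LinearMap.coe_toContinuousLinearMap', hg_def, LinearMap.coe_comp,
        Function.comp_apply, map_sub, map_smul, Submodule.coe_subtype]
      rfl
    have E2 : (fun t : ℝ => ((pI (β x ((φ t u : L))) : L))
        - t • ((a : L)) - t ^ 2 • ((b : L))) =o[nhds 0] fun t => t ^ 2 := by
      set g : L →ₗ[ℝ] L := I.subtype ∘ₗ (pI ∘ₗ (β x)) with hg_def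
      have h0 := (g.toContinuousLinearMap.isBigO_comp
        (fun t : ℝ => ((φ t u : L)) - t • ((η u : L)) - t ^ 2 • ((ω u : L)))
        (nhds 0)).trans_isLittleO (hTaylor u)
      refine h0.congr_left fun t => ?_
      simp only [LinearMap.coe_toContinuousLinearMap', hg_def, LinearMap.coe_comp,
        Function.comp_apply, map_sub, map_smul, Submodule.coe_subtype]
      rfl
    have E3 := hTaylor bu
    have E4 : (fun t : ℝ => t • ((φ t a : L)) - t ^ 2 • ((η a : L)))
        =o[nhds 0] fun t => t ^ 2 := by
      have h1 := aux_smul_littleo (hTaylor a)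
      have h2 := (aux_const_smul ((ω a : L)) 3).trans_isLittleO aux_cube_littleo_sq
      refine (h1.add h2).congr_left fun t => ?_
      simp only [smul_sub, smul_smul]
      module
    -- the quadratic remainder
    set q : ℝ → I := fun t => pI (β x ((φ t u : L))) - t • a with hq_def
    have hqO : (fun t : ℝ => ((q t : L))) =O[nhds 0] fun t => t ^ 2 := by
      have := E2.isBigO.add (aux_const_smul ((b : L)) 2)
      refine this.congr_left fun t => ?_
      simp only [hq_def]
      push_cast
      abel
    have E5 : (fun t : ℝ => ((φ t (q t) : L))) =o[nhds 0] fun t => t ^ 2 := by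
      let e := Module.finBasis ℝ I
      have hterm : ∀ i, (fun t : ℝ => e.repr (q t) i • ((φ t (e i) : L)))
          =o[nhds 0] fun t => t ^ 2 := by
        intro i
        have hcoord : (fun t : ℝ => e.repr (q t) i) =O[nhds 0] fun t => t ^ 2 := by
          set ℓ : L →ₗ[ℝ] ℝ := (e.coord i) ∘ₗ pI with hl_def
          have h2 := (ℓ.toContinuousLinearMap.isBigO_comp
            (fun t : ℝ => ((q t : L))) (nhds 0)).trans hqO
          refine h2.congr_left fun t => ?_
          simp [hl_def, hI (q t), Module.Basis.coord_apply]
        have hphi : (fun t : ℝ => ((φ t (e i) : L))) =O[nhds 0] fun t => t := by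
          have h1 := ((hTaylor (e i)).isBigO).trans aux_sq_bigO_id
          have h2 := aux_const_smul1 ((η (e i) : L))
          have h3 := (aux_const_smul ((ω (e i) : L)) 2).trans aux_sq_bigO_id
          refine ((h1.add h2).add h3).congr_left fun t => ?_
          abel
        have hmul := hcoord.smul hphi
        have h4 : (fun t : ℝ => (t ^ 2 : ℝ) • t) = fun t : ℝ => t ^ 3 := by
          funext t; simp [smul_eq_mul]; ring
        rw [h4] at hmul
        exact hmul.trans_isLittleO aux_cube_littleo_sq
      have hsumO := Asymptotics.IsLittleO.sum (fun i (_ : i ∈ Finset.univ) => hterm i)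
      refine hsumO.congr_left fun t => ?_
      conv_rhs => rw [← Module.Basis.sum_repr e (q t)]
      rw [map_sum]
      push_cast
      rw [Finset.sum_apply]
      refine Finset.sum_congr rfl fun i _ => ?_
      rw [map_smul]
      push_cast
      ring
    -- total
    have Etot : (fun t : ℝ => t • (((c : L)) - ((η bu : L)))
        + t ^ 2 • (((d : L)) - ((ω bu : L)) - ((η a : L))))
        =o[nhds 0] fun t => t ^ 2 := by
      have hcomb := ((E3.add E4).add E5).sub E1
      refine hcomb.congr_left fun t => ?_
      have hvt : bu + pI (β x ((φ t u : L))) = bu + t • a + q t := by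
        simp only [hq_def]; abel
      have hφs : ((φ t (bu + pI (β x ((φ t u : L)))) : L))
          = ((φ t bu : L)) + t • ((φ t a : L)) + ((φ t (q t) : L)) := by
        rw [hvt, map_add, map_add, map_smul]
        push_cast
        ring
      have hk := key t
      rw [hφs] at hk
      rw [hk]
      module
    obtain ⟨hw1, hw2⟩ := aux_coeff Etot
    constructor
    · have h1 : ((c - η bu : Ic) : L) = 0 := by push_cast; exact hw1
      have h2 : c - η bu = 0 := by exact_mod_cast h1
      have := sub_eq_zero.mp h2
      rw [hc_def] at this
      exact this
    · have h1 : ((d - η a - ω bu : Ic) : L) = 0 := by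
        push_cast
        rw [← hw2]; abel
      have h2 : d - η a - ω bu = 0 := by exact_mod_cast h1
      rw [hd_def, ha_def, hbu_def] at h2
      exact h2
  refine ⟨fun x u => (main x u).1, fun x u => (main x u).2, fun x u => ?_⟩
  have h2 := (main x u).2
  have h3 : η (pI (β x ((η u : L))))
      = pC (β x ((ω u : L))) - ω ⟨β x (u : L), hIdeal x (u : L) u.2⟩ := by
    have h4 : pC (β x ((ω u : L))) - ω ⟨β x (u : L), hIdeal x (u : L) u.2⟩
        - η (pI (β x ((η u : L)))) = 0 := by rw [← h2]; abel
    have := sub_eq_zero.mp h4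
    exact this.symm
  rw [h3]
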